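/- Let y ∈ ℝ^M and for u ∈ ℝ^M let P(u) ∈ ℝ^{M×N²} have entries P(u)_{m,(k,l)} = (Φᵀ u)_k · B̃_{kl} · Φ_{ml}, and let b(u) = y − β⁻¹ u. Then for u ∈ ℝ^M: P(u) · (√γ ⊗ √γ) = b(u) if and only if u = Σ_y(γ)⁻¹ y; and in that case yᵀ Σ_y(γ)⁻¹ y = yᵀ u. Consequently (Lemma 2), for any constant C, the level-set condition yᵀ Σ_y(γ)⁻¹ y = C is equivalent to the linear condition P(u) (√γ ⊗ √γ) = y − β⁻¹ u for the vector u = Σ_y(γ)⁻¹ y, which satisfies yᵀ u = C. -/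

import Mathlib

open Matrix

/-- Lemma 2: with `P(u)_{m,(k,l)} = (Φᵀu)_k B̃_{kl} Φ_{ml}` and `b(u) = y − β⁻¹ u`, one has
`P(u)(√γ ⊗ √γ) = b(u)` iff `u = Σ_y(γ)⁻¹ y`; in that case `yᵀ Σ_y(γ)⁻¹ y = yᵀ u`.
Consequently, for any constant `C`, `yᵀ Σ_y(γ)⁻¹ y = C` iff there is `u` with `yᵀu = C`
and `P(u)(√γ ⊗ √γ) = y − β⁻¹ u`. -/
theorem stmt_5 (M g L : ℕ) (hM : 0 < M) (hg : 0 < g) (hL : 0 < L)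
    (Φ : Matrix (Fin M) (Fin g × Fin L) ℝ)
    (β : ℝ) (hβ : 0 < β)
    (Btil : Matrix (Fin g × Fin L) (Fin g × Fin L) ℝ) (hB : Btil.PosDef)
    (hBdiag : ∀ k l : Fin g × Fin L, k.1 ≠ l.1 → Btil k l = 0)
    (γ : Fin g × Fin L → ℝ) (hγ : ∀ k, 0 ≤ γ k)
    (y : Fin M → ℝ)
    (Sy : Matrix (Fin M) (Fin M) ℝ)
    (hSy : Sy = β⁻¹ • (1 : Matrix (Fin M) (Fin M) ℝ) +
      Φ * (Matrix.diagonal (fun k => Real.sqrt (γ k)) * Btil *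
        Matrix.diagonal (fun k => Real.sqrt (γ k))) * Φᵀ)
    (P : (Fin M → ℝ) → Matrix (Fin M) ((Fin g × Fin L) × (Fin g × Fin L)) ℝ)
    (hP : P = fun u => Matrix.of fun (m : Fin M) (p : (Fin g × Fin L) × (Fin g × Fin L)) =>
      Φᵀ.mulVec u p.1 * Btil p.1 p.2 * Φ m p.2)
    (v : (Fin g × Fin L) × (Fin g × Fin L) → ℝ)
    (hv : v = fun p => Real.sqrt (γ p.1) * Real.sqrt (γ p.2)) :
    (∀ u : Fin M → ℝ, (P u).mulVec v = y - β⁻¹ • u ↔ u = Sy⁻¹.mulVec y) ∧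
    (∀ u : Fin M → ℝ, (P u).mulVec v = y - β⁻¹ • u →
      y ⬝ᵥ Sy⁻¹.mulVec y = y ⬝ᵥ u) ∧
    (∀ C : ℝ, y ⬝ᵥ Sy⁻¹.mulVec y = C ↔
      ∃ u : Fin M → ℝ, y ⬝ᵥ u = C ∧ (P u).mulVec v = y - β⁻¹ • u) := by
  -- symmetry of Btil over ℝ
  have hBsymm : ∀ k l, Btil l k = Btil k l := by
    intro k l
    have := hB.isHermitian
    have h2 := congrFun (congrFun this k) l
    simpa [Matrix.conjTranspose_apply] using h2
  -- key computation
  have key : ∀ u : Fin M → ℝ, (P u).mulVec v =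
      (Φ * (Matrix.diagonal (fun k => Real.sqrt (γ k)) * Btil *
        Matrix.diagonal (fun k => Real.sqrt (γ k))) * Φᵀ).mulVec u := by
    intro u
    funext m
    have hD : ∀ k l, (Matrix.diagonal (fun k => Real.sqrt (γ k)) * Btil *
        Matrix.diagonal (fun k => Real.sqrt (γ k))) k l
        = Real.sqrt (γ k) * Btil k l * Real.sqrt (γ l) := by
      intro k l
      rw [Matrix.mul_diagonal, Matrix.diagonal_mul]
    simp only [hP, hv, Matrix.mulVec, dotProduct, Matrix.of_apply, Matrix.mul_apply,
      Matrix.transpose_apply, hD, Finset.sum_mul, Finset.mul_sum]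
    rw [Fintype.sum_prod_type]
    conv_rhs => rw [Finset.sum_comm]
    refine Finset.sum_congr rfl fun k _ => ?_
    conv_rhs => rw [Finset.sum_comm]
    refine Finset.sum_congr rfl fun l _ => ?_
    refine Finset.sum_congr rfl fun m' _ => ?_
    rw [hBsymm k l]
    ring
  -- Sy is positive definite, hence invertible
  have hsqrt : ∀ k : Fin g × Fin L, star (Real.sqrt (γ k)) = Real.sqrt (γ k) := fun k => rfl
  have hDh : (Matrix.diagonal (fun k => Real.sqrt (γ k))
      : Matrix (Fin g × Fin L) (Fin g × Fin L) ℝ)ᴴ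
      = Matrix.diagonal (fun k => Real.sqrt (γ k)) := by
    rw [Matrix.conjTranspose]
    simp [Matrix.diagonal_transpose]
  have hmid : (Matrix.diagonal (fun k => Real.sqrt (γ k)) * Btil *
      Matrix.diagonal (fun k => Real.sqrt (γ k))).PosSemidef := by
    have := hB.posSemidef.mul_mul_conjTranspose_same
      (Matrix.diagonal (fun k => Real.sqrt (γ k)))
    rwa [hDh] at this
  have hSyPD : Sy.PosDef := by
    rw [hSy]
    refine Matrix.PosDef.add_posSemidef ?_ ?_
    · refine Matrix.posDef_iff_dotProduct_mulVec.2 ⟨?_, fun x hx => ?_⟩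
      · show (β⁻¹ • (1 : Matrix (Fin M) (Fin M) ℝ))ᴴ = _
        rw [Matrix.conjTranspose_smul, Matrix.conjTranspose_one]
        simp
      · have hxx : 0 < star x ⬝ᵥ x := by
          simpa using (dotProduct_star_self_pos_iff (v := x)).2 hx
        simp only [Matrix.smul_mulVec, Matrix.one_mulVec, dotProduct_smul, smul_eq_mul]
        exact mul_pos (inv_pos.2 hβ) hxx
    · have := hmid.mul_mul_conjTranspose_same Φ
      simpa using this
  have hdet : IsUnit Sy.det := isUnit_iff_ne_zero.2 hSyPD.det_pos.ne'
  have hiff : ∀ u : Fin M → ℝ, (P u).mulVec v = y - β⁻¹ • u ↔ u = Sy⁻¹.mulVec y := by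
    intro u
    have heq : (P u).mulVec v = y - β⁻¹ • u ↔ Sy.mulVec u = y := by
      rw [key, hSy]
      constructor
      · intro h
        rw [Matrix.add_mulVec, Matrix.smul_mulVec, Matrix.one_mulVec, h]
        abel
      · intro h
        rw [Matrix.add_mulVec, Matrix.smul_mulVec, Matrix.one_mulVec] at h
        rw [← h]
        abel
    rw [heq]
    constructor
    · intro h
      rw [← h, Matrix.mulVec_mulVec, Matrix.nonsing_inv_mul Sy hdet, Matrix.one_mulVec]
    · intro h
      rw [h, Matrix.mulVec_mulVec, Matrix.mul_nonsing_inv Sy hdet, Matrix.one_mulVec]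
  refine ⟨hiff, fun u h => ?_, fun C => ?_⟩
  · rw [(hiff u).1 h]
  · constructor
    · intro hC
      exact ⟨Sy⁻¹.mulVec y, hC, (hiff _).2 rfl⟩
    · rintro ⟨u, hu, h⟩
      rw [(hiff u).1 h] at hu
      exact hu
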